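/- The image under ρ of the open polytope 𝔓^{n-1} = {(y_1,...,y_n) ∈ W^{n-1} : max(y_1,...,y_n) − min(y_1,...,y_n) < 1} equals the open simplex T(n) = {(r_1,...,r_{n-1}) ∈ ℝ^{n-1}_{≥0} : r_1 + ... + r_{n-1} < n}. -/

import Mathlib

/-- The sorting map ρ : ℝ^{n+1} → ℝ^n_{≥0}. -/
noncomputable def rho (n : ℕ) (y : Fin (n + 1) → ℝ) : Fin n → ℝ :=
  fun i =>
    ((n : ℝ) + 1) *
      (y (Tuple.sort y i.succ) - y (Tuple.sort y i.castSucc))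

private lemma telescope (n : ℕ) (g : Fin (n + 1) → ℝ) :
    ∑ i : Fin n, (g i.succ - g i.castSucc) = g (Fin.last n) - g 0 := by
  set h : ℕ → ℝ := fun k => g ⟨min k n, by omega⟩ with hh
  have key : ∀ i : Fin n, g i.succ - g i.castSucc = h (↑i + 1) - h ↑i := by
    intro i
    have h1 : (⟨min (↑i + 1) n, by omega⟩ : Fin (n+1)) = i.succ := by
      ext; simp [Nat.min_eq_left (Nat.succ_le_of_lt i.isLt)]
    have h2 : (⟨min ↑i n, by omega⟩ : Fin (n+1)) = i.castSucc := by
      ext; simp [Nat.min_eq_left (le_of_lt i.isLt)]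
    simp only [hh, h1, h2]
  rw [Finset.sum_congr rfl (fun i _ => key i),
    Fin.sum_univ_eq_sum_range (fun k => h (k + 1) - h k), Finset.sum_range_sub]
  have h3 : (⟨min n n, by omega⟩ : Fin (n+1)) = Fin.last n := by ext; simp
  have h4 : (⟨min 0 n, by omega⟩ : Fin (n+1)) = 0 := by ext; simp
  simp only [hh, h3, h4]

private lemma sup'_mono (n : ℕ) (g : Fin (n + 1) → ℝ) (hg : Monotone g) :
    Finset.univ.sup' Finset.univ_nonempty g = g (Fin.last n) :=
  le_antisymm (Finset.sup'_le _ _ fun i _ => hg (Fin.le_last i))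
    (Finset.le_sup' g (Finset.mem_univ _))

private lemma inf'_mono (n : ℕ) (g : Fin (n + 1) → ℝ) (hg : Monotone g) :
    Finset.univ.inf' Finset.univ_nonempty g = g 0 :=
  le_antisymm (Finset.inf'_le g (Finset.mem_univ _))
    (Finset.le_inf' _ _ fun i _ => hg (Fin.zero_le i))


/-- ρ(𝔓^{n}) = T(n+1), where
`𝔓 = {y ∈ W : max y - min y < 1}` and `T(a) = {r ≥ 0 : Σ r_i < a}`. -/
theorem rho_image_P_eq_T (n : ℕ) :
    rho n ''
        {y : Fin (n + 1) → ℝ |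
          (∑ i, y i) = 0 ∧
            Finset.univ.sup' Finset.univ_nonempty y -
                Finset.univ.inf' Finset.univ_nonempty y < 1} =
      {r : Fin n → ℝ | (∀ i, 0 ≤ r i) ∧ ∑ i, r i < (n : ℝ) + 1} := by
  have hn1 : (0:ℝ) < (n:ℝ) + 1 := by positivity
  ext r
  simp only [Set.mem_image, Set.mem_setOf_eq]
  constructor
  · rintro ⟨y, ⟨hsum, hlt⟩, rfl⟩
    set σ := Tuple.sort y with hσ
    have mono : Monotone (y ∘ σ) := Tuple.monotone_sort y
    have hsup : Finset.univ.sup' Finset.univ_nonempty y = y (σ (Fin.last n)) := by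
      refine le_antisymm (Finset.sup'_le _ _ fun i _ => ?_) (Finset.le_sup' y (Finset.mem_univ _))
      have : y i = (y ∘ σ) (σ⁻¹ i) := by simp
      rw [this]
      exact mono (Fin.le_last _)
    have hinf : Finset.univ.inf' Finset.univ_nonempty y = y (σ 0) := by
      refine le_antisymm (Finset.inf'_le y (Finset.mem_univ _)) (Finset.le_inf' _ _ fun i _ => ?_)
      have : y i = (y ∘ σ) (σ⁻¹ i) := by simp
      rw [this]
      exact mono (Fin.zero_le _)
    constructor
    · intro i
      have := mono (Fin.castSucc_le_succ i)
      simp only [rho]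
      have : y (σ i.castSucc) ≤ y (σ i.succ) := this
      nlinarith
    · have : ∑ i, rho n y i
          = ((n:ℝ) + 1) * ∑ i : Fin n, ((y ∘ σ) i.succ - (y ∘ σ) i.castSucc) := by
        rw [Finset.mul_sum]; rfl
      rw [this, telescope n (y ∘ σ)]
      have h1 : (y ∘ σ) (Fin.last n) - (y ∘ σ) 0 < 1 := by
        rw [hsup, hinf] at hlt; exact hlt
      nlinarith
  · rintro ⟨hpos, htot⟩
    set r' : ℕ → ℝ := fun k => if h : k < n then r ⟨k, h⟩ else 0 with hr'
    have hr'nonneg : ∀ k, 0 ≤ r' k := by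
      intro k; simp only [hr']; split <;> [exact hpos _; exact le_rfl]
    set S : ℕ → ℝ := fun j => (∑ i ∈ Finset.range j, r' i) / ((n:ℝ) + 1) with hS
    have hSmono : Monotone S := by
      intro a b hab
      simp only [hS]
      gcongr
      exact fun i _ _ => hr'nonneg i
    set c : ℝ := (∑ j : Fin (n + 1), S ↑j) / ((n:ℝ) + 1) with hc
    set y : Fin (n + 1) → ℝ := fun j => S ↑j - c with hy
    have ymono : Monotone y := by
      intro a b hab
      simp only [hy]
      exact sub_le_sub_right (hSmono (by exact_mod_cast hab)) c
    have hsort : Tuple.sort y = Equiv.refl _ := Tuple.sort_eq_refl_iff_monotone.mpr ymono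
    have hsumr : ∑ i ∈ Finset.range n, r' i = ∑ i : Fin n, r i := by
      rw [← Fin.sum_univ_eq_sum_range r' n]
      exact Finset.sum_congr rfl fun i _ => by simp [hr', i.isLt]
    refine ⟨y, ⟨?_, ?_⟩, ?_⟩
    · simp only [hy]
      rw [Finset.sum_sub_distrib, Finset.sum_const, Finset.card_univ, Fintype.card_fin, hc]
      rw [nsmul_eq_mul]; push_cast
      field_simp
      ring
    · rw [sup'_mono n y ymono, inf'_mono n y ymono]
      simp only [hy, Fin.val_last, Fin.val_zero, hS]
      rw [hsumr]
      have he : (∑ i : Fin n, r i) / ((n:ℝ) + 1) - c -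
          ((∑ i ∈ Finset.range 0, r' i) / ((n:ℝ) + 1) - c)
          = (∑ i : Fin n, r i) / ((n:ℝ) + 1) := by
        simp [Finset.sum_range_zero]
      rw [he, div_lt_one hn1]
      linarith [htot]
    · funext i
      simp only [rho, hsort]
      simp only [rho, hsort, Equiv.refl_apply, hy, Fin.val_succ, Fin.coe_castSucc, hS,
        Finset.sum_range_succ]
      have : r' ↑i = r i := by simp [hr', i.isLt]
      field_simp
      linarith [this]
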